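/- Let y = Φx + v with x K-sparse with support T, and let S ⊂ T. Then α := max_{j ∈ T^c} |φ_j' r_S| satisfies α ≤ (δ_{K+1} + δ_{K+1}δ_K/(1−δ_K)) ‖x_{T∖S}‖₂ + √(1+δ_M)‖v‖₂, where r_S = P_S^⊥ y. -/

import Mathlib

open Matrix Finset

noncomputable def l2 {n : Type*} [Fintype n] (x : n → ℝ) : ℝ :=
  Real.sqrt (∑ i, (x i) ^ 2)

def Sparse {N : ℕ} (K : ℕ) (x : Fin N → ℝ) : Prop :=
  (Finset.univ.filter (fun i => x i ≠ 0)).card ≤ K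

def RIP {M N : ℕ} (Φ : Matrix (Fin M) (Fin N) ℝ) (K : ℕ) (δ : ℝ) : Prop :=
  ∀ x : Fin N → ℝ, Sparse K x →
    (1 - δ) * (l2 x) ^ 2 ≤ (l2 (Φ.mulVec x)) ^ 2 ∧
    (l2 (Φ.mulVec x)) ^ 2 ≤ (1 + δ) * (l2 x) ^ 2

lemma l2_nonneg {n : Type*} [Fintype n] (x : n → ℝ) : 0 ≤ l2 x := Real.sqrt_nonneg _

lemma l2_sq {n : Type*} [Fintype n] (x : n → ℝ) : (l2 x) ^ 2 = ∑ i, (x i) ^ 2 :=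
  Real.sq_sqrt (Finset.sum_nonneg fun i _ => sq_nonneg _)

lemma dot_self_eq {n : Type*} [Fintype n] (x : n → ℝ) : x ⬝ᵥ x = (l2 x) ^ 2 := by
  rw [l2_sq]; simp [dotProduct, sq]

lemma eq_zero_of_l2 {n : Type*} [Fintype n] {x : n → ℝ} (h : l2 x = 0) : x = 0 := by
  have h2 : ∑ i, (x i) ^ 2 = 0 := by
    have := l2_sq x; rw [h] at this; simpa using this.symm
  funext i
  have := (Finset.sum_eq_zero_iff_of_nonneg (fun i _ => sq_nonneg (x i))).mp h2 i (by simp)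
  exact pow_eq_zero_iff (by norm_num) |>.mp this

lemma abs_dot_le {n : Type*} [Fintype n] (a b : n → ℝ) : |a ⬝ᵥ b| ≤ l2 a * l2 b := by
  have h := Finset.sum_mul_sq_le_sq_mul_sq Finset.univ a b
  have h1 : (a ⬝ᵥ b) ^ 2 ≤ (l2 a * l2 b) ^ 2 := by
    rw [mul_pow, l2_sq, l2_sq]; simpa [dotProduct] using h
  have h2 : 0 ≤ l2 a * l2 b := mul_nonneg (l2_nonneg a) (l2_nonneg b)
  nlinarith [abs_nonneg (a ⬝ᵥ b), sq_abs (a ⬝ᵥ b)]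

lemma l2_smul {n : Type*} [Fintype n] (c : ℝ) (x : n → ℝ) : l2 (c • x) = |c| * l2 x := by
  unfold l2
  rw [← Real.sqrt_sq_eq_abs, ← Real.sqrt_mul (sq_nonneg c), Finset.mul_sum]
  exact congrArg Real.sqrt (Finset.sum_congr rfl fun i _ => by simp [mul_pow])

lemma sparse_of {N K : ℕ} {x : Fin N → ℝ} (s : Finset (Fin N))
    (h : ∀ i, x i ≠ 0 → i ∈ s) (hc : s.card ≤ K) : Sparse K x :=
  le_trans (Finset.card_le_card (fun i hi => h i (by simpa using hi))) hc
open Matrix Finset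

lemma cross_half {M N r : ℕ} {Φ : Matrix (Fin M) (Fin N) ℝ} {δ : ℝ}
    (h : RIP Φ r δ) {u w : Fin N → ℝ}
    (hd : ∀ i, u i = 0 ∨ w i = 0)
    (hcard : ((univ.filter (fun i => u i ≠ 0)) ∪ (univ.filter (fun i => w i ≠ 0))).card ≤ r) :
    Φ.mulVec u ⬝ᵥ Φ.mulVec w ≤ δ / 2 * ((l2 u) ^ 2 + (l2 w) ^ 2) := by
  set s := (univ.filter (fun i => u i ≠ 0)) ∪ (univ.filter (fun i => w i ≠ 0)) with hs
  have hmem : ∀ i, i ∉ s → u i = 0 ∧ w i = 0 := by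
    intro i hi
    constructor <;> (by_contra hne; apply hi; rw [hs]; simp [hne])
  have sp1 : Sparse r (u + w) := by
    apply sparse_of s _ hcard
    intro i hi
    by_contra hin
    obtain ⟨h1, h2⟩ := hmem i hin
    simp [h1, h2] at hi
  have sp2 : Sparse r (u - w) := by
    apply sparse_of s _ hcard
    intro i hi
    by_contra hin
    obtain ⟨h1, h2⟩ := hmem i hin
    simp [h1, h2] at hi
  have uw0 : u ⬝ᵥ w = 0 := by
    apply Finset.sum_eq_zero
    intro i _
    rcases hd i with h0 | h0 <;> simp [h0]
  have wu0 : w ⬝ᵥ u = 0 := by rw [dotProduct_comm]; exact uw0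
  have e1 : (l2 (u + w)) ^ 2 = (l2 u) ^ 2 + (l2 w) ^ 2 := by
    rw [← dot_self_eq, ← dot_self_eq, ← dot_self_eq, add_dotProduct, dotProduct_add,
      dotProduct_add, uw0, wu0]; ring
  have e2 : (l2 (u - w)) ^ 2 = (l2 u) ^ 2 + (l2 w) ^ 2 := by
    rw [← dot_self_eq, ← dot_self_eq, ← dot_self_eq, sub_dotProduct, dotProduct_sub,
      dotProduct_sub, uw0, wu0]; ring
  have key : 4 * (Φ.mulVec u ⬝ᵥ Φ.mulVec w) =
      (l2 (Φ.mulVec (u + w))) ^ 2 - (l2 (Φ.mulVec (u - w))) ^ 2 := by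
    rw [← dot_self_eq, ← dot_self_eq, Matrix.mulVec_add, Matrix.mulVec_sub,
      add_dotProduct, dotProduct_add, dotProduct_add, sub_dotProduct, dotProduct_sub,
      dotProduct_sub, dotProduct_comm (Φ.mulVec w) (Φ.mulVec u)]
    ring
  have hub := (h (u + w) sp1).2
  have hlb := (h (u - w) sp2).1
  rw [e1] at hub
  rw [e2] at hlb
  linarith

lemma cross {M N r : ℕ} {Φ : Matrix (Fin M) (Fin N) ℝ} {δ : ℝ} (hδ : 0 ≤ δ)
    (h : RIP Φ r δ) {u w : Fin N → ℝ}
    (hd : ∀ i, u i = 0 ∨ w i = 0)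
    (hcard : ((univ.filter (fun i => u i ≠ 0)) ∪ (univ.filter (fun i => w i ≠ 0))).card ≤ r) :
    |Φ.mulVec u ⬝ᵥ Φ.mulVec w| ≤ δ * l2 u * l2 w := by
  by_cases hu : l2 u = 0
  · rw [eq_zero_of_l2 hu]
    simp [Matrix.mulVec_zero]
    exact mul_nonneg (mul_nonneg hδ (l2_nonneg _)) (l2_nonneg _)
  by_cases hw : l2 w = 0
  · rw [eq_zero_of_l2 hw]
    simp [Matrix.mulVec_zero]
    exact mul_nonneg (mul_nonneg hδ (l2_nonneg _)) (l2_nonneg _)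
  have ha : 0 < l2 u := lt_of_le_of_ne (l2_nonneg u) (Ne.symm hu)
  have hb : 0 < l2 w := lt_of_le_of_ne (l2_nonneg w) (Ne.symm hw)
  set a := l2 u
  set b := l2 w
  set u' := a⁻¹ • u with hu'
  set w' := b⁻¹ • w with hw'
  have hd' : ∀ i, u' i = 0 ∨ w' i = 0 := by
    intro i; rcases hd i with h0 | h0
    · left; simp [hu', h0]
    · right; simp [hw', h0]
  have hfu : (univ.filter (fun i => u' i ≠ 0)) = (univ.filter (fun i => u i ≠ 0)) := by
    apply Finset.filter_congr; intro i _
    simp [hu', ha.ne']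
  have hfw : (univ.filter (fun i => w' i ≠ 0)) = (univ.filter (fun i => w i ≠ 0)) := by
    apply Finset.filter_congr; intro i _
    simp [hw', hb.ne']
  have hcard' : ((univ.filter (fun i => u' i ≠ 0)) ∪ (univ.filter (fun i => w' i ≠ 0))).card ≤ r := by
    rw [hfu, hfw]; exact hcard
  have hl2u' : l2 u' = 1 := by rw [hu', l2_smul, abs_of_pos (inv_pos.2 ha), inv_mul_cancel₀ ha.ne']
  have hl2w' : l2 w' = 1 := by rw [hw', l2_smul, abs_of_pos (inv_pos.2 hb), inv_mul_cancel₀ hb.ne']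
  have hd'' : ∀ i, u' i = 0 ∨ (-w') i = 0 := by
    intro i; rcases hd' i with h0 | h0
    · left; exact h0
    · right; simp [h0]
  have hfnw : (univ.filter (fun i => (-w') i ≠ 0)) = (univ.filter (fun i => w' i ≠ 0)) := by
    apply Finset.filter_congr; intro i _; simp
  have h1 := cross_half h hd' hcard'
  have h2 := cross_half h hd'' (by rw [hfnw]; exact hcard')
  rw [hl2u', hl2w'] at h1
  have hnw : Φ.mulVec (-w') = -(Φ.mulVec w') := by rw [Matrix.mulVec_neg]
  rw [hnw, dotProduct_neg, hl2u'] at h2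
  have hl2nw : l2 (-w') = l2 w' := by
    have : (-w') = (-1 : ℝ) • w' := by funext i; simp
    rw [this, l2_smul]; simp
  rw [hl2nw, hl2w'] at h2
  have habs : |Φ.mulVec u' ⬝ᵥ Φ.mulVec w'| ≤ δ := by
    rw [abs_le]; constructor <;> nlinarith
  have heq : Φ.mulVec u ⬝ᵥ Φ.mulVec w = a * b * (Φ.mulVec u' ⬝ᵥ Φ.mulVec w') := by
    rw [hu', hw', Matrix.mulVec_smul, Matrix.mulVec_smul, smul_dotProduct, dotProduct_smul]
    rw [smul_eq_mul, smul_eq_mul]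
    field_simp
  rw [heq, abs_mul, abs_mul, abs_of_pos ha, abs_of_pos hb]
  calc a * b * |Φ.mulVec u' ⬝ᵥ Φ.mulVec w'| ≤ a * b * δ := by
        apply mul_le_mul_of_nonneg_left habs (by positivity)
    _ = δ * a * b := by ring

def colSub {M N : ℕ} (Φ : Matrix (Fin M) (Fin N) ℝ) (S : Finset (Fin N)) :
    Matrix (Fin M) {i // i ∈ S} ℝ := fun r c => Φ r c.1

noncomputable def resid {M N : ℕ} (Φ : Matrix (Fin M) (Fin N) ℝ) (S : Finset (Fin N))
    (y : Fin M → ℝ) : Fin M → ℝ :=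
  y - (colSub Φ S).mulVec
    ((((colSub Φ S)ᵀ * colSub Φ S)⁻¹).mulVec ((colSub Φ S)ᵀ.mulVec y))

def restr {N : ℕ} (x : Fin N → ℝ) (S : Finset (Fin N)) : {i // i ∈ S} → ℝ :=
  fun i => x i.1

noncomputable def embed {N : ℕ} (S : Finset (Fin N)) (z : {i // i ∈ S} → ℝ) :
    Fin N → ℝ := fun i => if h : i ∈ S then z ⟨i, h⟩ else 0

lemma embed_not_mem {N : ℕ} {S : Finset (Fin N)} (z : {i // i ∈ S} → ℝ) {i : Fin N}
    (h : i ∉ S) : embed S z i = 0 := dif_neg h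

lemma embed_support {N : ℕ} {S : Finset (Fin N)} (z : {i // i ∈ S} → ℝ) {i : Fin N}
    (h : embed S z i ≠ 0) : i ∈ S := by
  by_contra hc; exact h (embed_not_mem z hc)

lemma sum_embed_eq {N : ℕ} (S : Finset (Fin N)) (g : Fin N → ℝ)
    (hg : ∀ i ∉ S, g i = 0) : ∑ i, g i = ∑ c : {i // i ∈ S}, g c.1 := by
  rw [Finset.sum_coe_sort S (fun i => g i)]
  symm
  apply Finset.sum_subset (Finset.subset_univ S)
  intro i _ hi
  exact hg i hi

lemma mulVec_embed {M N : ℕ} (Φ : Matrix (Fin M) (Fin N) ℝ) (S : Finset (Fin N))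
    (z : {i // i ∈ S} → ℝ) : Φ.mulVec (embed S z) = (colSub Φ S).mulVec z := by
  funext r
  show (Φ.mulVec (embed S z)) r = ((colSub Φ S).mulVec z) r
  simp only [Matrix.mulVec, dotProduct]
  rw [sum_embed_eq S (fun k => Φ r k * embed S z k)
    (fun i hi => by simp [embed, dif_neg hi])]
  apply Finset.sum_congr rfl
  intro c _
  simp [embed, colSub]

lemma l2_embed {N : ℕ} (S : Finset (Fin N)) (z : {i // i ∈ S} → ℝ) :
    l2 (embed S z) = l2 z := by
  unfold l2
  congr 1
  rw [sum_embed_eq S (fun k => (embed S z k) ^ 2)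
    (fun i hi => by simp [embed, dif_neg hi])]
  apply Finset.sum_congr rfl
  intro c _
  simp [embed]

section Gram

variable {M N K : ℕ} (Φ : Matrix (Fin M) (Fin N) ℝ) (S : Finset (Fin N)) {δ : ℝ}

lemma G_lb (hK : S.card ≤ K) (h : RIP Φ K δ) (z : {i // i ∈ S} → ℝ) :
    (1 - δ) * (l2 z) ^ 2 ≤ z ⬝ᵥ ((colSub Φ S)ᵀ * colSub Φ S).mulVec z := by
  have h1 : ((colSub Φ S)ᵀ * colSub Φ S).mulVec z
      = (colSub Φ S)ᵀ.mulVec ((colSub Φ S).mulVec z) := (Matrix.mulVec_mulVec _ _ _).symm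
  rw [h1, Matrix.dotProduct_mulVec, Matrix.vecMul_transpose, ← mulVec_embed,
    dot_self_eq, ← l2_embed S z]
  have hsp : Sparse K (embed S z) :=
    sparse_of S (fun i hi => embed_support z hi) hK
  exact (h (embed S z) hsp).1

lemma G_unit (hc : 0 < 1 - δ) (hK : S.card ≤ K) (h : RIP Φ K δ) :
    IsUnit ((colSub Φ S)ᵀ * colSub Φ S) := by
  set G := (colSub Φ S)ᵀ * colSub Φ S with hG
  rw [← Matrix.mulVec_injective_iff_isUnit]
  intro z1 z2 hzz
  have hsub : G.mulVec (z1 - z2) = 0 := by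
    rw [Matrix.mulVec_sub, hzz, sub_self]
  have hlb := G_lb Φ S hK h (z1 - z2)
  rw [hsub] at hlb
  simp only [dotProduct_zero] at hlb
  have h0 : (l2 (z1 - z2)) ^ 2 ≤ 0 := by nlinarith
  have h1 : l2 (z1 - z2) = 0 := by nlinarith [l2_nonneg (z1 - z2), sq_nonneg (l2 (z1 - z2))]
  have := eq_zero_of_l2 h1
  exact sub_eq_zero.mp this

lemma G_mulVec_Ginv (hunit : IsUnit ((colSub Φ S)ᵀ * colSub Φ S))
    (q : {i // i ∈ S} → ℝ) :
    ((colSub Φ S)ᵀ * colSub Φ S).mulVec ((((colSub Φ S)ᵀ * colSub Φ S)⁻¹).mulVec q) = q := by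
  rw [Matrix.mulVec_mulVec, Matrix.mul_nonsing_inv _ ((Matrix.isUnit_iff_isUnit_det _).mp hunit),
    Matrix.one_mulVec]

lemma Ginv_mulVec_G (hunit : IsUnit ((colSub Φ S)ᵀ * colSub Φ S))
    (q : {i // i ∈ S} → ℝ) :
    (((colSub Φ S)ᵀ * colSub Φ S)⁻¹).mulVec (((colSub Φ S)ᵀ * colSub Φ S).mulVec q) = q := by
  rw [Matrix.mulVec_mulVec, Matrix.nonsing_inv_mul _ ((Matrix.isUnit_iff_isUnit_det _).mp hunit),
    Matrix.one_mulVec]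

lemma Ginv_bound (hc : 0 < 1 - δ) (hK : S.card ≤ K) (h : RIP Φ K δ)
    (q : {i // i ∈ S} → ℝ) :
    l2 ((((colSub Φ S)ᵀ * colSub Φ S)⁻¹).mulVec q) ≤ l2 q / (1 - δ) := by
  have hunit := G_unit Φ S hc hK h
  set w := (((colSub Φ S)ᵀ * colSub Φ S)⁻¹).mulVec q with hw
  have h1 := G_lb Φ S hK h w
  have h2 : ((colSub Φ S)ᵀ * colSub Φ S).mulVec w = q := G_mulVec_Ginv Φ S hunit q
  rw [h2] at h1
  have h3 : w ⬝ᵥ q ≤ l2 w * l2 q := le_trans (le_abs_self _) (abs_dot_le _ _)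
  rcases eq_or_lt_of_le (l2_nonneg w) with h0 | h0
  · rw [← h0]
    exact div_nonneg (l2_nonneg q) (le_of_lt hc)
  · rw [le_div_iff₀ hc]
    nlinarith

lemma proj_contract (hc : 0 < 1 - δ) (hK : S.card ≤ K) (h : RIP Φ K δ)
    (u : Fin M → ℝ) :
    l2 (u - (colSub Φ S).mulVec ((((colSub Φ S)ᵀ * colSub Φ S)⁻¹).mulVec
      ((colSub Φ S)ᵀ.mulVec u))) ≤ l2 u := by
  have hunit := G_unit Φ S hc hK h
  set A := colSub Φ S with hA
  set w := ((Aᵀ * A)⁻¹).mulVec (Aᵀ.mulVec u) with hwdef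
  set p := A.mulVec w with hp
  have hGw : (Aᵀ * A).mulVec w = Aᵀ.mulVec u := G_mulVec_Ginv Φ S hunit _
  have h1 : u ⬝ᵥ p = (Aᵀ.mulVec u) ⬝ᵥ w := by
    rw [hp, Matrix.dotProduct_mulVec]
    congr 1
    rw [← Matrix.mulVec_transpose]
  have h2 : p ⬝ᵥ p = (Aᵀ.mulVec u) ⬝ᵥ w := by
    rw [hp, Matrix.dotProduct_mulVec, ← Matrix.mulVec_transpose, Matrix.mulVec_mulVec, hGw]
  have h3 : (l2 (u - p)) ^ 2 = (l2 u) ^ 2 - p ⬝ᵥ p := by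
    rw [← dot_self_eq, ← dot_self_eq, sub_dotProduct, dotProduct_sub, dotProduct_sub,
      dotProduct_comm p u, h1, h2]
    ring
  have h4 : 0 ≤ p ⬝ᵥ p := by rw [dot_self_eq]; exact sq_nonneg _
  nlinarith [l2_nonneg (u - p), l2_nonneg u]

end Gram

theorem alpha_upper_bound {M N K : ℕ} (Φ : Matrix (Fin M) (Fin N) ℝ)
    (x : Fin N → ℝ) (T S : Finset (Fin N)) (v y : Fin M → ℝ)
    (hy : y = Φ.mulVec x + v) (hT : T.card = K) (hsupp : ∀ i, i ∉ T → x i = 0)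
    (hS : S ⊂ T) (δK δK1 δM : ℝ) (hδK0 : 0 ≤ δK) (hδK1 : δK < 1)
    (hδK10 : 0 ≤ δK1) (hδK11 : δK1 < 1) (hδM0 : 0 ≤ δM) (hδM1 : δM < 1)
    (hRIPK : RIP Φ K δK) (hRIPK1 : RIP Φ (K + 1) δK1) (hRIPM : RIP Φ M δM) :
    ∀ j, j ∉ T →
      |(fun i => Φ i j) ⬝ᵥ resid Φ S y| ≤
        (δK1 + δK1 * δK / (1 - δK)) * l2 (restr x (T \ S)) +
          Real.sqrt (1 + δM) * l2 v := by
  intro j hj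
  have hST : S ⊆ T := hS.subset
  have hSK : S.card ≤ K := hT ▸ Finset.card_le_card hST
  have hTSK : (T \ S).card ≤ K := hT ▸ Finset.card_le_card (Finset.sdiff_subset)
  have hc : 0 < 1 - δK := by linarith
  set A := colSub Φ S with hA
  set G := Aᵀ * A with hG
  have hunit : IsUnit G := G_unit Φ S hc hSK hRIPK
  set x2 := embed (T \ S) (restr x (T \ S)) with hx2
  have hx2eq : ∀ i, x2 i = if i ∈ T \ S then x i else 0 := by
    intro i; by_cases h : i ∈ T \ S <;> simp [hx2, embed, restr, h]
  have hx2supp : ∀ i, x2 i ≠ 0 → i ∈ T \ S := fun i hi => embed_support _ hi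
  have hxsplit : x = embed S (restr x S) + x2 := by
    funext i
    by_cases hiS : i ∈ S
    · have hiTS : i ∉ T \ S := by simp [hiS]
      simp [embed, restr, hiS, hx2eq i, hiTS]
    · by_cases hiT : i ∈ T
      · have hmem : i ∈ T \ S := Finset.mem_sdiff.mpr ⟨hiT, hiS⟩
        simp [embed, restr, hiS, hx2eq i, hmem]
      · have hmem : i ∉ T \ S := by simp [hiT]
        simp [embed, restr, hiS, hx2eq i, hmem, hsupp i hiT]
  set q := Aᵀ.mulVec (Φ.mulVec x2) with hq
  set w := (G⁻¹).mulVec q with hw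
  have hy2 : y = A.mulVec (restr x S) + Φ.mulVec x2 + v := by
    rw [hy]
    have h1 : Φ.mulVec x = A.mulVec (restr x S) + Φ.mulVec x2 := by
      conv_lhs => rw [hxsplit]
      rw [Matrix.mulVec_add, mulVec_embed, ← hA]
    rw [h1]
  have hAty : Aᵀ.mulVec y = G.mulVec (restr x S) + q + Aᵀ.mulVec v := by
    rw [hy2, Matrix.mulVec_add, Matrix.mulVec_add, Matrix.mulVec_mulVec, ← hG, ← hq]
  have hGinvAty : (G⁻¹).mulVec (Aᵀ.mulVec y)
      = restr x S + w + (G⁻¹).mulVec (Aᵀ.mulVec v) := by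
    rw [hAty, Matrix.mulVec_add, Matrix.mulVec_add, ← hw]
    congr 2
    have := Ginv_mulVec_G Φ S hunit (restr x S)
    rw [← hA, ← hG] at this
    exact this
  have hresid : resid Φ S y = Φ.mulVec x2 - Φ.mulVec (embed S w)
      + (v - A.mulVec ((G⁻¹).mulVec (Aᵀ.mulVec v))) := by
    have hdef : resid Φ S y = y - A.mulVec ((G⁻¹).mulVec (Aᵀ.mulVec y)) := rfl
    rw [hdef, hGinvAty, Matrix.mulVec_add, Matrix.mulVec_add]
    rw [mulVec_embed Φ S w, ← hA, hy2]
    abel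
  set φj : Fin M → ℝ := fun i => Φ i j with hφ
  set ej : Fin N → ℝ := Pi.single j 1 with hej
  have hφj : Φ.mulVec ej = φj := by
    rw [hej, Matrix.mulVec_single]
    funext i; simp [hφ]
  have hejsupp : ∀ i, ej i ≠ 0 → i ∈ ({j} : Finset (Fin N)) := by
    intro i hi
    simp only [hej, Pi.single_apply] at hi
    by_contra hij
    simp only [Finset.mem_singleton] at hij
    simp [hij] at hi
  have hl2ej : l2 ej = 1 := by
    unfold l2
    have h1 : ∑ i, (ej i) ^ 2 = 1 := by
      rw [hej, Finset.sum_eq_single j]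
      · simp
      · intro b _ hb; simp [Pi.single_apply, hb]
      · intro hju; exact absurd (Finset.mem_univ j) hju
    rw [h1, Real.sqrt_one]
  have hfsub : ∀ (u : Fin N → ℝ) (s : Finset (Fin N)), (∀ i, u i ≠ 0 → i ∈ s) →
      (Finset.univ.filter (fun i => u i ≠ 0)) ⊆ s := by
    intro u s h i hi
    exact h i (by simpa using hi)
  -- term 1
  have hd1 : ∀ i, ej i = 0 ∨ x2 i = 0 := by
    intro i
    by_cases hij : i = j
    · right
      subst hij
      rw [hx2eq]
      have h1 : i ∉ T \ S := fun hm => hj (Finset.mem_sdiff.mp hm).1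
      simp [h1]
    · left; simp [hej, Pi.single_apply, hij]
  have hcard1 : ((Finset.univ.filter (fun i => ej i ≠ 0))
      ∪ (Finset.univ.filter (fun i => x2 i ≠ 0))).card ≤ K + 1 := by
    have hsub : ((Finset.univ.filter (fun i => ej i ≠ 0))
        ∪ (Finset.univ.filter (fun i => x2 i ≠ 0))) ⊆ insert j (T \ S) :=
      Finset.union_subset ((hfsub ej _ hejsupp).trans (by simp))
        ((hfsub x2 _ hx2supp).trans (Finset.subset_insert _ _))
    calc _ ≤ (insert j (T \ S)).card := Finset.card_le_card hsub
      _ ≤ (T \ S).card + 1 := Finset.card_insert_le _ _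
      _ ≤ K + 1 := by omega
  have ht1 : |φj ⬝ᵥ Φ.mulVec x2| ≤ δK1 * l2 x2 := by
    rw [← hφj]
    have hcr := cross hδK10 hRIPK1 hd1 hcard1
    rw [hl2ej] at hcr
    simpa using hcr
  -- bound on q
  have hqsupp : ∀ i, embed S q i ≠ 0 → i ∈ S := fun i hi => embed_support _ hi
  have hd3 : ∀ i, embed S q i = 0 ∨ x2 i = 0 := by
    intro i
    by_cases hiS : i ∈ S
    · right
      rw [hx2eq]
      have h1 : i ∉ T \ S := by simp [hiS]
      simp [h1]
    · left; exact embed_not_mem _ hiS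
  have hcard3 : ((Finset.univ.filter (fun i => embed S q i ≠ 0))
      ∪ (Finset.univ.filter (fun i => x2 i ≠ 0))).card ≤ K := by
    have hsub : ((Finset.univ.filter (fun i => embed S q i ≠ 0))
        ∪ (Finset.univ.filter (fun i => x2 i ≠ 0))) ⊆ T := Finset.union_subset
      ((hfsub _ _ hqsupp).trans hST) ((hfsub _ _ hx2supp).trans Finset.sdiff_subset)
    calc _ ≤ T.card := Finset.card_le_card hsub
      _ ≤ K := le_of_eq hT
  have hkey : ∀ z : {i // i ∈ S} → ℝ, z ⬝ᵥ (Aᵀ.mulVec (Φ.mulVec x2))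
      = (Φ.mulVec (embed S z)) ⬝ᵥ (Φ.mulVec x2) := by
    intro z
    rw [Matrix.dotProduct_mulVec, Matrix.vecMul_transpose, hA, ← mulVec_embed]
  have hqq : (l2 q) ^ 2 = (Φ.mulVec (embed S q)) ⬝ᵥ (Φ.mulVec x2) := by
    rw [← dot_self_eq, ← hkey q, hq]
  have hqbound : l2 q ≤ δK * l2 x2 := by
    have hcr := cross hδK0 hRIPK hd3 hcard3
    rw [l2_embed, ← hqq] at hcr
    have habs : (l2 q) ^ 2 ≤ δK * l2 q * l2 x2 := le_trans (le_abs_self _) hcr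
    rcases eq_or_lt_of_le (l2_nonneg q) with h0 | h0
    · rw [← h0]
      exact mul_nonneg hδK0 (l2_nonneg _)
    · nlinarith
  -- term 2
  have hwsupp : ∀ i, embed S w i ≠ 0 → i ∈ S := fun i hi => embed_support _ hi
  have hd2 : ∀ i, ej i = 0 ∨ embed S w i = 0 := by
    intro i
    by_cases hij : i = j
    · right
      subst hij
      exact embed_not_mem _ (fun hm => hj (hST hm))
    · left; simp [hej, Pi.single_apply, hij]
  have hcard2 : ((Finset.univ.filter (fun i => ej i ≠ 0))
      ∪ (Finset.univ.filter (fun i => embed S w i ≠ 0))).card ≤ K + 1 := by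
    have hsub : ((Finset.univ.filter (fun i => ej i ≠ 0))
        ∪ (Finset.univ.filter (fun i => embed S w i ≠ 0))) ⊆ insert j S :=
      Finset.union_subset ((hfsub _ _ hejsupp).trans (by simp))
        ((hfsub _ _ hwsupp).trans (Finset.subset_insert _ _))
    calc _ ≤ (insert j S).card := Finset.card_le_card hsub
      _ ≤ S.card + 1 := Finset.card_insert_le _ _
      _ ≤ K + 1 := by omega
  have hwbound : l2 w ≤ l2 q / (1 - δK) := by
    rw [hw]
    have := Ginv_bound Φ S hc hSK hRIPK q
    rw [← hA, ← hG] at this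
    exact this
  have hwb2 : l2 w ≤ δK * l2 x2 / (1 - δK) :=
    hwbound.trans (div_le_div_of_nonneg_right hqbound hc.le)
  have ht2 : |φj ⬝ᵥ Φ.mulVec (embed S w)| ≤ δK1 * δK / (1 - δK) * l2 x2 := by
    rw [← hφj]
    have hcr := cross hδK10 hRIPK1 hd2 hcard2
    rw [hl2ej, l2_embed] at hcr
    calc |Φ.mulVec ej ⬝ᵥ Φ.mulVec (embed S w)| ≤ δK1 * 1 * l2 w := hcr
      _ = δK1 * l2 w := by ring
      _ ≤ δK1 * (δK * l2 x2 / (1 - δK)) := mul_le_mul_of_nonneg_left hwb2 hδK10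
      _ = δK1 * δK / (1 - δK) * l2 x2 := by ring
  -- term 3
  have hproj : l2 (v - A.mulVec ((G⁻¹).mulVec (Aᵀ.mulVec v))) ≤ l2 v := by
    have := proj_contract Φ S hc hSK hRIPK v
    rw [← hA, ← hG] at this
    exact this
  have hφnorm : l2 φj ≤ Real.sqrt (1 + δM) := by
    rcases Nat.eq_zero_or_pos M with hM | hM
    · haveI : IsEmpty (Fin M) := by rw [hM]; infer_instance
      have h0 : l2 φj = 0 := by
        unfold l2
        rw [Finset.univ_eq_empty, Finset.sum_empty, Real.sqrt_zero]
      rw [h0]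
      exact Real.sqrt_nonneg _
    · have hsp : Sparse M ej := sparse_of {j} hejsupp (by simpa using Nat.succ_le_of_lt hM)
      have hub := (hRIPM ej hsp).2
      rw [hφj, hl2ej] at hub
      rw [Real.le_sqrt (l2_nonneg _) (by linarith)]
      simpa using hub
  have ht3 : |φj ⬝ᵥ (v - A.mulVec ((G⁻¹).mulVec (Aᵀ.mulVec v)))|
      ≤ Real.sqrt (1 + δM) * l2 v :=
    le_trans (abs_dot_le _ _)
      (mul_le_mul hφnorm hproj (l2_nonneg _) (Real.sqrt_nonneg _))
  -- combine
  have hsplit2 : φj ⬝ᵥ resid Φ S y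
      = φj ⬝ᵥ Φ.mulVec x2 - φj ⬝ᵥ Φ.mulVec (embed S w)
        + φj ⬝ᵥ (v - A.mulVec ((G⁻¹).mulVec (Aᵀ.mulVec v))) := by
    rw [hresid, dotProduct_add, dotProduct_sub]
  have hl2x2 : l2 x2 = l2 (restr x (T \ S)) := l2_embed _ _
  calc |φj ⬝ᵥ resid Φ S y|
      ≤ |φj ⬝ᵥ Φ.mulVec x2| + |φj ⬝ᵥ Φ.mulVec (embed S w)|
        + |φj ⬝ᵥ (v - A.mulVec ((G⁻¹).mulVec (Aᵀ.mulVec v)))| := by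
        rw [hsplit2]
        exact le_trans (abs_add_le _ _) (add_le_add_left (abs_sub _ _) _)
    _ ≤ δK1 * l2 x2 + δK1 * δK / (1 - δK) * l2 x2 + Real.sqrt (1 + δM) * l2 v :=
        add_le_add (add_le_add ht1 ht2) ht3
    _ = (δK1 + δK1 * δK / (1 - δK)) * l2 (restr x (T \ S))
        + Real.sqrt (1 + δM) * l2 v := by
        rw [← hl2x2]; ring
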